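/- Let σ₁, σ₂, σ₃ be nonzero real numbers and let A₁, A₂, A₃ be real numbers with A₁ ≠ −1, A₂ ≠ 0, A₃ ≠ 1. Suppose that for every X ∈ ℝ, σ₁·(X − A₁)·(X + 1)/(−1 − A₁) + σ₂·(X − A₂)·X/(−A₂) + σ₃·(X − A₃)·(X − 1)/(1 − A₃) = 0. Then σ₁ ≠ σ₃, 3σ₁ + σ₂ − σ₃ ≠ 0, σ₁ − σ₂ − 3σ₃ ≠ 0, and A₁ = (σ₁ − σ₂ + σ₃)/(3σ₁ + σ₂ − σ₃), A₂ = σ₂/(σ₃ − σ₁), A₃ = (σ₁ − σ₂ + σ₃)/(σ₁ − σ₂ − 3σ₃); moreover A₁·(1 − A₂ + A₃) = A₃·(1 − A₁ + A₂). -/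

import Mathlib

/-- Proposition (trois), algebraic content: if the flux polynomials of three
catenoidal ends with asymptotic boundaries `−1, 0, 1` sum to zero, then the
axes are uniquely determined by the growths and the three geodesics
`(A₁, −1)`, `(A₂, 0)`, `(A₃, 1)` are concurrent. -/
theorem stmt18 (σ₁ σ₂ σ₃ : ℝ) (hσ₁ : σ₁ ≠ 0) (hσ₂ : σ₂ ≠ 0) (hσ₃ : σ₃ ≠ 0)
    (A₁ A₂ A₃ : ℝ) (hA₁ : A₁ ≠ -1) (hA₂ : A₂ ≠ 0) (hA₃ : A₃ ≠ 1)
    (hbal : ∀ X : ℝ,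
      σ₁ * (X - A₁) * (X + 1) / (-1 - A₁) +
      σ₂ * (X - A₂) * X / (-A₂) +
      σ₃ * (X - A₃) * (X - 1) / (1 - A₃) = 0) :
    σ₁ ≠ σ₃ ∧ 3 * σ₁ + σ₂ - σ₃ ≠ 0 ∧ σ₁ - σ₂ - 3 * σ₃ ≠ 0 ∧
    A₁ = (σ₁ - σ₂ + σ₃) / (3 * σ₁ + σ₂ - σ₃) ∧
    A₂ = σ₂ / (σ₃ - σ₁) ∧
    A₃ = (σ₁ - σ₂ + σ₃) / (σ₁ - σ₂ - 3 * σ₃) ∧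
    A₁ * (1 - A₂ + A₃) = A₃ * (1 - A₁ + A₂) := by
  have hd₁ : (-1 - A₁ : ℝ) ≠ 0 := by intro h; apply hA₁; linarith
  have hd₂ : (-A₂ : ℝ) ≠ 0 := neg_ne_zero.mpr hA₂
  have hd₃ : (1 - A₃ : ℝ) ≠ 0 := by intro h; apply hA₃; linarith
  obtain ⟨a, ha⟩ : ∃ a : ℝ, a = σ₁ / (-1 - A₁) := ⟨_, rfl⟩
  obtain ⟨b, hb⟩ : ∃ b : ℝ, b = σ₂ / (-A₂) := ⟨_, rfl⟩
  obtain ⟨c, hc⟩ : ∃ c : ℝ, c = σ₃ / (1 - A₃) := ⟨_, rfl⟩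
  have hane : a ≠ 0 := ha ▸ div_ne_zero hσ₁ hd₁
  have hbne : b ≠ 0 := hb ▸ div_ne_zero hσ₂ hd₂
  have hcne : c ≠ 0 := hc ▸ div_ne_zero hσ₃ hd₃
  have hs₁ : σ₁ = a * (-1 - A₁) := by rw [ha]; exact (div_mul_cancel₀ σ₁ hd₁).symm
  have hs₂ : σ₂ = b * (-A₂) := by rw [hb]; exact (div_mul_cancel₀ σ₂ hd₂).symm
  have hs₃ : σ₃ = c * (1 - A₃) := by rw [hc]; exact (div_mul_cancel₀ σ₃ hd₃).symm
  have key : ∀ X : ℝ,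
      a * (X - A₁) * (X + 1) + b * (X - A₂) * X + c * (X - A₃) * (X - 1) = 0 := by
    intro X
    have h := hbal X
    have e1 : σ₁ * (X - A₁) * (X + 1) / (-1 - A₁) = a * (X - A₁) * (X + 1) := by
      rw [hs₁]; field_simp
    have e2 : σ₂ * (X - A₂) * X / (-A₂) = b * (X - A₂) * X := by
      rw [hs₂]; field_simp
    have e3 : σ₃ * (X - A₃) * (X - 1) / (1 - A₃) = c * (X - A₃) * (X - 1) := by
      rw [hs₃]; field_simp
    rw [e1, e2, e3] at h
    exact h
  have eP2 : a + b + c = 0 := by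
    linear_combination (key 1) / 2 + (key (-1)) / 2 - key 0
  have eP1 : a * (1 - A₁) - b * A₂ - c * (1 + A₃) = 0 := by
    linear_combination (key 1) / 2 - (key (-1)) / 2
  have eP0 : c * A₃ = a * A₁ := by
    linear_combination key 0
  -- key scalar quantities
  have h31 : σ₃ - σ₁ = -b := by
    rw [hs₁, hs₃]; linear_combination eP2 - eP0
  have hN : σ₁ - σ₂ + σ₃ = -4 * (a * A₁) := by
    rw [hs₁, hs₂, hs₃]; linear_combination -eP1 - 2 * eP0
  have hD₁ : 3 * σ₁ + σ₂ - σ₃ = -4 * a := by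
    rw [hs₁, hs₂, hs₃]; linear_combination eP1 + 2 * eP0
  have hD₃ : σ₁ - σ₂ - 3 * σ₃ = -4 * c := by
    rw [hs₁, hs₂, hs₃]; linear_combination -eP1 + 2 * eP0
  have h13 : σ₁ ≠ σ₃ := by
    intro h
    apply hbne
    have : σ₃ - σ₁ = 0 := by rw [h]; ring
    linarith [h31.symm.trans this]
  have hD₁ne : 3 * σ₁ + σ₂ - σ₃ ≠ 0 := by
    rw [hD₁]; intro h; apply hane; linarith
  have hD₃ne : σ₁ - σ₂ - 3 * σ₃ ≠ 0 := by
    rw [hD₃]; intro h; apply hcne; linarith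
  have hA₁eq : A₁ = (σ₁ - σ₂ + σ₃) / (3 * σ₁ + σ₂ - σ₃) := by
    rw [eq_div_iff hD₁ne]
    linear_combination A₁ * hD₁ - hN
  have hA₂eq : A₂ = σ₂ / (σ₃ - σ₁) := by
    have h31ne : σ₃ - σ₁ ≠ 0 := sub_ne_zero.mpr (Ne.symm h13)
    rw [eq_div_iff h31ne]
    rw [hs₂]
    linear_combination A₂ * h31
  have hA₃eq : A₃ = (σ₁ - σ₂ + σ₃) / (σ₁ - σ₂ - 3 * σ₃) := by
    rw [eq_div_iff hD₃ne]
    linear_combination A₃ * hD₃ - hN - 4 * eP0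
  refine ⟨h13, hD₁ne, hD₃ne, hA₁eq, hA₂eq, hA₃eq, ?_⟩
  have h31ne : σ₃ - σ₁ ≠ 0 := sub_ne_zero.mpr (Ne.symm h13)
  rw [hA₁eq, hA₂eq, hA₃eq]
  have hD₁ne' : σ₁ * 3 + σ₂ - σ₃ ≠ 0 := by rw [mul_comm]; exact hD₁ne
  have hD₃ne' : σ₁ - σ₂ - σ₃ * 3 ≠ 0 := by rw [mul_comm]; exact hD₃ne
  field_simp [hD₁ne', hD₃ne', h31ne]
  ring
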